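/- Let $E$ be an infinite dimensional Banach space and $1<p<\infty$. Suppose there exists $C>0$ such that for every $x\in S_E$ and every bounded weakly null net $(w_\alpha)$ in $E$, $\limsup_\alpha\|x+w_\alpha\|^p\ge 1+C\,\limsup_\alpha\|w_\alpha\|^p$. Then there exists a constant $C'>0$ such that for every net $(x_\alpha)$ contained in a compact subset of the closed unit ball $B_E$ and every bounded weakly null net $(w_\alpha)$ in $E$ (same index set), $\limsup_\alpha\|x_\alpha+w_\alpha\|^p\ge \limsup_\alpha(\|x_\alpha\|^p+C'\|w_\alpha\|^p)$. -/
import Mathlib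


open Filter Topology

/-- The canonical directed index set associated to a filter. -/
structure NetIdx {ι : Type} (U : Filter ι) : Type where
  pt : ι
  s : Set ι
  mem : pt ∈ s
  memU : s ∈ U

instance NetIdx.preorder {ι : Type} (U : Filter ι) : Preorder (NetIdx U) where
  le d e := e.s ⊆ d.s
  le_refl _ := subset_rfl
  le_trans _ _ _ h1 h2 := Set.Subset.trans h2 h1

theorem NetIdx.le_def {ι : Type} {U : Filter ι} {d e : NetIdx U} :
    d ≤ e ↔ e.s ⊆ d.s := Iff.rfl

theorem NetIdx.directed {ι : Type} (U : Filter ι) [U.NeBot] :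
    IsDirected (NetIdx U) (· ≤ ·) := by
  constructor
  rintro ⟨a, S, haS, hS⟩ ⟨b, T, hbT, hT⟩
  have hST : S ∩ T ∈ U := Filter.inter_mem hS hT
  obtain ⟨c, hc⟩ := Filter.nonempty_of_mem hST
  exact ⟨⟨c, S ∩ T, hc, hST⟩, le_def.2 Set.inter_subset_left,
    le_def.2 Set.inter_subset_right⟩

theorem NetIdx.nonempty {ι : Type} (U : Filter ι) [U.NeBot] :
    Nonempty (NetIdx U) := by
  obtain ⟨c, hc⟩ := Filter.nonempty_of_mem (Filter.univ_mem (f := U))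
  exact ⟨⟨c, Set.univ, hc, Filter.univ_mem⟩⟩

instance NetIdx.atTop_neBot {ι : Type} (U : Filter ι) [U.NeBot] :
    (atTop : Filter (NetIdx U)).NeBot :=
  Filter.atTop_neBot_iff.2 ⟨NetIdx.nonempty U, NetIdx.directed U⟩

theorem NetIdx.tendsto_proj {ι : Type} (U : Filter ι) [U.NeBot] :
    Tendsto (fun d : NetIdx U => d.pt) atTop U := by
  intro S hS
  obtain ⟨c, hc⟩ := Filter.nonempty_of_mem hS
  have : Set.Ici (⟨c, S, hc, hS⟩ : NetIdx U) ⊆ {d : NetIdx U | d.pt ∈ S} := by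
    rintro ⟨b, T, hbT, hT⟩ (h : T ⊆ S)
    exact h hbT
  rw [Filter.mem_map]
  exact Filter.mem_of_superset (Filter.Ici_mem_atTop _) this

theorem stmt3 {E : Type*} [NormedAddCommGroup E] [NormedSpace ℝ E] [CompleteSpace E]
    (hinf : ¬ FiniteDimensional ℝ E) (p : ℝ) (hp1 : 1 < p)
    (C : ℝ) (hC : 0 < C)
    (hyp : ∀ x : E, ‖x‖ = 1 →
      ∀ (ι : Type) (_ : Preorder ι), IsDirected ι (· ≤ ·) → Nonempty ι →
      ∀ w : ι → E, (∃ M : ℝ, ∀ α, ‖w α‖ ≤ M) →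
      (∀ f : E →L[ℝ] ℝ, Tendsto (fun α => f (w α)) atTop (nhds 0)) →
      1 + C * limsup (fun α => ‖w α‖ ^ p) atTop ≤
        limsup (fun α => ‖x + w α‖ ^ p) atTop) :
    ∃ C' : ℝ, 0 < C' ∧
      ∀ (ι : Type) (_ : Preorder ι), IsDirected ι (· ≤ ·) → Nonempty ι →
      ∀ (x : ι → E) (K : Set E), IsCompact K → K ⊆ Metric.closedBall 0 1 →
      (∀ α, x α ∈ K) →
      ∀ w : ι → E, (∃ M : ℝ, ∀ α, ‖w α‖ ≤ M) →
      (∀ f : E →L[ℝ] ℝ, Tendsto (fun α => f (w α)) atTop (nhds 0)) →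
      limsup (fun α => ‖x α‖ ^ p + C' * ‖w α‖ ^ p) atTop ≤
        limsup (fun α => ‖x α + w α‖ ^ p) atTop := by
  have hp0 : (0 : ℝ) < p := lt_trans one_pos hp1
  set C' : ℝ := min C 1 with hC'def
  have hC'pos : 0 < C' := lt_min hC one_pos
  have hC'le1 : C' ≤ 1 := min_le_right _ _
  have hC'leC : C' ≤ C := min_le_left _ _
  refine ⟨C', hC'pos, ?_⟩
  intro ι pre hdir hne x K hK hK1 hxK w hMbd hwnull
  obtain ⟨M, hM⟩ := hMbd
  haveI hFnb : (atTop : Filter ι).NeBot := Filter.atTop_neBot_iff.2 ⟨hne, hdir⟩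
  set M' : ℝ := max M 0 with hM'def
  have hM' : ∀ α, ‖w α‖ ≤ M' := fun α => (hM α).trans (le_max_left _ _)
  have hM'0 : (0 : ℝ) ≤ M' := le_max_right _ _
  have hx1 : ∀ α, ‖x α‖ ≤ 1 := fun α => mem_closedBall_zero_iff.1 (hK1 (hxK α))
  set L : ι → ℝ := fun α => ‖x α‖ ^ p + C' * ‖w α‖ ^ p with hLdef
  set R : ι → ℝ := fun α => ‖x α + w α‖ ^ p with hRdef
  -- boundedness facts
  have hLbd : (atTop : Filter ι).IsBoundedUnder (· ≤ ·) L := by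
    refine isBoundedUnder_of ⟨1 + C' * M' ^ p, fun α => ?_⟩
    have h1 : ‖x α‖ ^ p ≤ 1 := Real.rpow_le_one (norm_nonneg _) (hx1 α) hp0.le
    have h2 : ‖w α‖ ^ p ≤ M' ^ p := Real.rpow_le_rpow (norm_nonneg _) (hM' α) hp0.le
    have h3 : C' * ‖w α‖ ^ p ≤ C' * M' ^ p :=
      mul_le_mul_of_nonneg_left h2 hC'pos.le
    simpa [hLdef] using add_le_add h1 h3
  have hLcob : (atTop : Filter ι).IsCoboundedUnder (· ≤ ·) L := by
    refine Filter.IsBoundedUnder.isCoboundedUnder_le ?_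
    refine isBoundedUnder_of ⟨0, fun α => ?_⟩
    have : (0:ℝ) ≤ L α := by
      have := Real.rpow_nonneg (norm_nonneg (x α)) p
      have := Real.rpow_nonneg (norm_nonneg (w α)) p
      positivity
    exact this
  have hRbd : (atTop : Filter ι).IsBoundedUnder (· ≤ ·) R := by
    refine isBoundedUnder_of ⟨(1 + M') ^ p, fun α => ?_⟩
    refine Real.rpow_le_rpow (norm_nonneg _) ?_ hp0.le
    exact (norm_add_le _ _).trans (add_le_add (hx1 α) (hM' α))
  by_contra hcon
  push_neg at hcon
  obtain ⟨a, ha1, ha2⟩ := exists_between hcon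
  obtain ⟨b, hb1, hb2⟩ := exists_between ha1
  -- build an ultrafilter refining atTop on which L is large
  have hfreq : ∃ᶠ α in (atTop : Filter ι), a < L α :=
    frequently_lt_of_lt_limsup hLcob ha2
  haveI hGnb : ((atTop : Filter ι) ⊓ 𝓟 {α | a < L α}).NeBot :=
    Filter.frequently_iff_neBot.1 hfreq
  set U : Ultrafilter ι := Ultrafilter.of ((atTop : Filter ι) ⊓ 𝓟 {α | a < L α}) with hUdef
  have hUle : (U : Filter ι) ≤ (atTop : Filter ι) :=
    (Ultrafilter.of_le _).trans inf_le_left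
  have hUP : ∀ᶠ α in (U : Filter ι), a < L α := by
    have h := (Ultrafilter.of_le ((atTop : Filter ι) ⊓ 𝓟 {α | a < L α})).trans inf_le_right
    exact h (Filter.mem_principal_self _)
  -- limit of x along U
  obtain ⟨x0, hx0K, hx0⟩ := hK.ultrafilter_le_nhds (U.map x) (by
    rw [Ultrafilter.coe_map, Filter.le_principal_iff, Filter.mem_map]
    exact Filter.univ_mem' hxK)
  have htx : Tendsto x (U : Filter ι) (𝓝 x0) := by
    rwa [Ultrafilter.coe_map] at hx0
  -- limit of ‖w‖ along U
  obtain ⟨r, hrmem, hr⟩ := (isCompact_Icc (a := (0:ℝ)) (b := M')).ultrafilter_le_nhds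
    (U.map fun α => ‖w α‖) (by
      rw [Ultrafilter.coe_map, Filter.le_principal_iff, Filter.mem_map]
      exact Filter.univ_mem' fun α => ⟨norm_nonneg _, hM' α⟩)
  have htr : Tendsto (fun α => ‖w α‖) (U : Filter ι) (𝓝 r) := by
    rwa [Ultrafilter.coe_map] at hr
  -- limit of ‖x0 + w‖ along U
  obtain ⟨s, hsmem, hs⟩ := (isCompact_Icc (a := (0:ℝ)) (b := ‖x0‖ + M')).ultrafilter_le_nhds
    (U.map fun α => ‖x0 + w α‖) (by
      rw [Ultrafilter.coe_map, Filter.le_principal_iff, Filter.mem_map]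
      exact Filter.univ_mem' fun α =>
        ⟨norm_nonneg _, (norm_add_le _ _).trans (add_le_add le_rfl (hM' α))⟩)
  have hts : Tendsto (fun α => ‖x0 + w α‖) (U : Filter ι) (𝓝 s) := by
    rwa [Ultrafilter.coe_map] at hs
  have hr0 : (0:ℝ) ≤ r := hrmem.1
  have hs0 : (0:ℝ) ≤ s := hsmem.1
  -- continuity of rpow
  have hrp : ∀ t : ℝ, ContinuousAt (fun u : ℝ => u ^ p) t := fun t =>
    Real.continuousAt_rpow_const t p (Or.inr hp0.le)
  -- Tendsto of L along U
  have htL : Tendsto L (U : Filter ι) (𝓝 (‖x0‖ ^ p + C' * r ^ p)) := by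
    have h1 : Tendsto (fun α => ‖x α‖ ^ p) (U : Filter ι) (𝓝 (‖x0‖ ^ p)) :=
      (hrp ‖x0‖).tendsto.comp htx.norm
    have h2 : Tendsto (fun α => ‖w α‖ ^ p) (U : Filter ι) (𝓝 (r ^ p)) :=
      (hrp r).tendsto.comp htr
    exact h1.add (h2.const_mul C')
  have haL : a ≤ ‖x0‖ ^ p + C' * r ^ p :=
    ge_of_tendsto htL (hUP.mono fun α h => h.le)
  -- ‖x α + w α‖ also tends to s along U
  have htxw : Tendsto (fun α => ‖x α + w α‖) (U : Filter ι) (𝓝 s) := by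
    have hd0 : Tendsto (fun α => ‖x α - x0‖) (U : Filter ι) (𝓝 0) := by
      have := (htx.sub (tendsto_const_nhds (x := x0))).norm
      simpa using this
    have hdiff : Tendsto (fun α => ‖x α + w α‖ - ‖x0 + w α‖) (U : Filter ι) (𝓝 0) := by
      refine squeeze_zero_norm (fun α => ?_) hd0
      have := abs_norm_sub_norm_le (x α + w α) (x0 + w α)
      simpa [Real.norm_eq_abs] using this.trans (le_of_eq (by congr 1; abel))
    have := hdiff.add hts
    simpa using this
  have htR : Tendsto R (U : Filter ι) (𝓝 (s ^ p)) := (hrp s).tendsto.comp htxw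
  -- from limsup R < b : s ^ p ≤ b
  have hsb : s ^ p ≤ b := by
    have hev : ∀ᶠ α in (atTop : Filter ι), R α < b := eventually_lt_of_limsup_lt hb1 hRbd
    exact le_of_tendsto htR ((hev.mono fun α h => h.le).filter_mono hUle)
  -- main inequality : ‖x0‖^p + C' r^p ≤ s^p
  have hmain : ‖x0‖ ^ p + C' * r ^ p ≤ s ^ p := by
    rcases eq_or_ne x0 0 with h0 | h0
    · subst h0
      have hsr : s = r := by
        refine tendsto_nhds_unique ?_ htr
        simpa using hts
      have : C' * r ^ p ≤ r ^ p := by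
        have := Real.rpow_nonneg hr0 p
        nlinarith
      simp only [norm_zero, Real.zero_rpow (ne_of_gt hp0), hsr]
      linarith
    · have hx0n : (0:ℝ) < ‖x0‖ := norm_pos_iff.2 h0
      haveI : (U : Filter ι).NeBot := Ultrafilter.neBot U
      set D := NetIdx (U : Filter ι) with hDdef
      have hproj : Tendsto (fun d : D => d.pt) atTop (U : Filter ι) :=
        NetIdx.tendsto_proj _
      set w' : D → E := fun d => ‖x0‖⁻¹ • w d.pt with hw'def
      have hbw' : ∃ M0 : ℝ, ∀ d : D, ‖w' d‖ ≤ M0 := by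
        refine ⟨‖x0‖⁻¹ * M', fun d => ?_⟩
        rw [hw'def, norm_smul, norm_inv, norm_norm]
        exact mul_le_mul_of_nonneg_left (hM' _) (inv_nonneg.2 hx0n.le)
      have hwn' : ∀ f : E →L[ℝ] ℝ, Tendsto (fun d : D => f (w' d)) atTop (𝓝 0) := by
        intro f
        have h1 : Tendsto (fun α => f (w α)) (U : Filter ι) (𝓝 0) :=
          (hwnull f).mono_left hUle
        have h2 : Tendsto (fun d : D => f (w d.pt)) atTop (𝓝 0) := h1.comp hproj
        have := h2.const_mul ‖x0‖⁻¹
        simpa [hw'def, map_smul, smul_eq_mul] using this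
      have key := hyp (‖x0‖⁻¹ • x0) (norm_smul_inv_norm h0) D inferInstance
        (NetIdx.directed _) (NetIdx.nonempty _) w' hbw' hwn'
      -- compute the two limsups via convergence
      have ht1 : Tendsto (fun d : D => ‖w' d‖ ^ p) atTop (𝓝 ((‖x0‖⁻¹ * r) ^ p)) := by
        refine (hrp _).tendsto.comp ?_
        have := (htr.comp hproj).const_mul ‖x0‖⁻¹
        refine this.congr fun d => ?_
        simp [hw'def, norm_smul, norm_inv, norm_norm, Function.comp]
      have ht2 : Tendsto (fun d : D => ‖‖x0‖⁻¹ • x0 + w' d‖ ^ p) atTop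
          (𝓝 ((‖x0‖⁻¹ * s) ^ p)) := by
        refine (hrp _).tendsto.comp ?_
        have := (hts.comp hproj).const_mul ‖x0‖⁻¹
        refine this.congr fun d => ?_
        have : ‖x0‖⁻¹ • x0 + w' d = ‖x0‖⁻¹ • (x0 + w d.pt) := by
          rw [hw'def, smul_add]
        rw [this, norm_smul, norm_inv, norm_norm]
        simp [Function.comp]
      rw [ht1.limsup_eq, ht2.limsup_eq] at key
      -- rearrange
      have hA : (0:ℝ) < ‖x0‖ ^ p := Real.rpow_pos_of_pos hx0n p
      rw [Real.mul_rpow (inv_nonneg.2 hx0n.le) hr0,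
        Real.mul_rpow (inv_nonneg.2 hx0n.le) hs0,
        Real.inv_rpow hx0n.le] at key
      have hkey2 := mul_le_mul_of_nonneg_left key hA.le
      have hcancel : ‖x0‖ ^ p * (‖x0‖ ^ p)⁻¹ = 1 := mul_inv_cancel₀ (ne_of_gt hA)
      have h1 : ‖x0‖ ^ p * ((‖x0‖ ^ p)⁻¹ * s ^ p) = s ^ p := by
        rw [← mul_assoc, hcancel, one_mul]
      have h2 : ‖x0‖ ^ p * (1 + C * ((‖x0‖ ^ p)⁻¹ * r ^ p)) = ‖x0‖ ^ p + C * r ^ p := by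
        calc ‖x0‖ ^ p * (1 + C * ((‖x0‖ ^ p)⁻¹ * r ^ p))
            = ‖x0‖ ^ p + (‖x0‖ ^ p * (‖x0‖ ^ p)⁻¹) * (C * r ^ p) := by ring
          _ = ‖x0‖ ^ p + C * r ^ p := by rw [hcancel, one_mul]
      rw [h1, h2] at hkey2
      have hCr : C' * r ^ p ≤ C * r ^ p :=
        mul_le_mul_of_nonneg_right hC'leC (Real.rpow_nonneg hr0 p)
      linarith
  linarith
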